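/- For every real ξ ≥ 2, ∑_{k > ξ} 2^{ω(k)} σ(k) / (k^2 φ(k)) ≪ (log ξ)/ξ, where the sum is over integers k > ξ. -/

import Mathlib

open scoped ENNReal


lemma st5_geom_le (p : ℕ) (hp1 : 1 ≤ p) : ∀ a : ℕ, (∑ i ∈ Finset.range (a+1), p ^ i) * (p - 1) ≤ p ^ (a+1) := by
  intro a
  induction a with
  | zero => simpa using Nat.sub_le p 1
  | succ b ih =>
    rw [Finset.sum_range_succ, add_mul]
    have h2 : p^(b+1) + p^(b+1)*(p-1) = p^(b+1)*(1 + (p-1)) := by ring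
    have h3 : 1 + (p-1) = p := by omega
    calc (∑ i ∈ Finset.range (b+1), p ^ i) * (p-1) + p^(b+1)*(p-1)
        ≤ p^(b+1) + p^(b+1)*(p-1) := by omega
      _ = p^(b+1)*p := by rw [h2, h3]
      _ = p^(b+1+1) := (pow_succ p _).symm

lemma tot_sigma_le (n : ℕ) : Nat.totient n * (ArithmeticFunction.sigma 1) n ≤ n^2 := by
  induction n using Nat.recOnPosPrimePosCoprime with
  | prime_pow p a hp ha =>
    have hpp : Nat.Prime p := hp
    rw [Nat.totient_prime_pow hpp ha, ArithmeticFunction.sigma_apply,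
      Nat.sum_divisors_prime_pow hpp]
    simp only [pow_one]
    calc p ^ (a-1) * (p-1) * ∑ i ∈ Finset.range (a+1), p ^ i
        = p^(a-1) * ((∑ i ∈ Finset.range (a+1), p ^ i) * (p-1)) := by ring
      _ ≤ p^(a-1) * p^(a+1) := Nat.mul_le_mul_left _ (st5_geom_le p hpp.one_lt.le a)
      _ = p ^ (a - 1 + (a+1)) := (pow_add p _ _).symm
      _ = (p^a)^2 := by rw [← pow_mul]; congr 1; omega
  | zero => simp
  | one => simp [ArithmeticFunction.sigma_one_apply]
  | coprime a b ha hb hab iha ihb =>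
    rw [Nat.totient_mul hab, ArithmeticFunction.isMultiplicative_sigma.map_mul_of_coprime hab,
      mul_pow]
    calc a.totient * b.totient * (ArithmeticFunction.sigma 1 a * ArithmeticFunction.sigma 1 b)
        = (a.totient * ArithmeticFunction.sigma 1 a) * (b.totient * ArithmeticFunction.sigma 1 b) := by ring
      _ ≤ a^2 * b^2 := Nat.mul_le_mul iha ihb


lemma st5_P1 (k : ℕ) (hk : 1 ≤ k) :
    (2:ℝ)^(k.primeFactors.card) * ((ArithmeticFunction.sigma 1) k : ℝ)
      / ((k:ℝ)^2 * (Nat.totient k : ℝ))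
    ≤ (∏ p ∈ k.primeFactors, (2*(p:ℝ)^2/((p:ℝ)-1)^2)) / (k:ℝ)^2 := by
  set P : ℝ := ∏ p ∈ k.primeFactors, (p:ℝ) with hPdef
  set Q : ℝ := ∏ p ∈ k.primeFactors, ((p:ℝ)-1) with hQdef
  have hone : ∀ p ∈ k.primeFactors, (1:ℝ) ≤ (p:ℝ) - 1 := by
    intro p hp
    have := (Nat.prime_of_mem_primeFactors hp).two_le
    have : (2:ℝ) ≤ (p:ℝ) := by exact_mod_cast this
    linarith
  have hQ1 : 1 ≤ Q := by
    rw [hQdef]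
    calc (1:ℝ) = ∏ _p ∈ k.primeFactors, (1:ℝ) := by rw [Finset.prod_const_one]
      _ ≤ _ := Finset.prod_le_prod (fun _ _ => zero_le_one) hone
  have hQ : 0 < Q := lt_of_lt_of_le one_pos hQ1
  have hP : 0 < P := Finset.prod_pos (fun p hp => by
    exact_mod_cast (Nat.prime_of_mem_primeFactors hp).pos)
  have hk0 : (0:ℝ) < (k:ℝ) := by exact_mod_cast hk
  have hφ : 0 < (Nat.totient k : ℝ) := by
    exact_mod_cast Nat.totient_pos.mpr (by omega)
  have hσ : 0 ≤ ((ArithmeticFunction.sigma 1) k : ℝ) := by positivity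
  -- identity φ * P = k * Q
  have hid : (Nat.totient k : ℝ) * P = (k:ℝ) * Q := by
    have h := Nat.totient_mul_prod_primeFactors k
    have hcast : ((∏ p ∈ k.primeFactors, (p-1) : ℕ) : ℝ) = Q := by
      push_cast
      refine Finset.prod_congr rfl fun p hp => ?_
      have h2 := (Nat.prime_of_mem_primeFactors hp).two_le
      rw [Nat.cast_sub (by omega)]
      norm_num
    have := congrArg (fun n : ℕ => (n : ℝ)) h
    push_cast at this
    rw [hPdef]
    push_cast
    rw [this]
    push_cast at hcast ⊢
    rw [hcast]
  have hprod : (∏ p ∈ k.primeFactors, (2*(p:ℝ)^2/((p:ℝ)-1)^2)) * Q^2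
      = 2^(k.primeFactors.card) * P^2 := by
    rw [hQdef, hPdef]
    calc (∏ p ∈ k.primeFactors, (2*(p:ℝ)^2/((p:ℝ)-1)^2)) * (∏ p ∈ k.primeFactors, ((p:ℝ)-1))^2
        = ∏ p ∈ k.primeFactors, (2*(p:ℝ)^2/((p:ℝ)-1)^2 * ((p:ℝ)-1)^2) := by
          rw [Finset.prod_mul_distrib, Finset.prod_pow]
      _ = ∏ p ∈ k.primeFactors, (2*(p:ℝ)^2) := by
          refine Finset.prod_congr rfl fun p hp => ?_
          have h1 : ((p:ℝ)-1)^2 ≠ 0 := by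
            have := hone p hp; positivity
          exact div_mul_cancel₀ _ h1
      _ = 2^(k.primeFactors.card) * (∏ p ∈ k.primeFactors, (p:ℝ))^2 := by
          rw [Finset.prod_mul_distrib, Finset.prod_const, Finset.prod_pow]
  have hσφ : ((ArithmeticFunction.sigma 1) k : ℝ) * (Nat.totient k : ℝ) ≤ (k:ℝ)^2 := by
    have := tot_sigma_le k
    have : ((Nat.totient k * (ArithmeticFunction.sigma 1) k : ℕ) : ℝ) ≤ ((k^2 : ℕ) : ℝ) := by
      exact_mod_cast this
    push_cast at this
    linarith
  rw [div_le_div_iff₀ (by positivity) (by positivity)]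
  -- goal : 2^c * σ * k^2 ≤ X * (k^2 * φ)
  have hPQ : P^2 * (Nat.totient k : ℝ)^2 = (k:ℝ)^2 * Q^2 := by
    have := congrArg (fun x : ℝ => x^2) hid
    simp only [mul_pow] at this
    linarith
  set X : ℝ := ∏ p ∈ k.primeFactors, (2*(p:ℝ)^2/((p:ℝ)-1)^2) with hXdef
  set σr : ℝ := ((ArithmeticFunction.sigma 1) k : ℝ)
  set φr : ℝ := (Nat.totient k : ℝ)
  set c : ℕ := k.primeFactors.card
  have key : σr * (k:ℝ)^2 * Q^2 ≤ P^2 * ((k:ℝ)^2 * φr) := by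
    have h2 : σr * φr^2 ≤ (k:ℝ)^2 * φr := by nlinarith
    have h3 : σr * (k:ℝ)^2 * Q^2 * φr^2 ≤ P^2 * ((k:ℝ)^2 * φr) * φr^2 := by
      calc σr * (k:ℝ)^2 * Q^2 * φr^2 = (σr*φr^2) * ((k:ℝ)^2*Q^2) := by ring
        _ ≤ ((k:ℝ)^2*φr) * ((k:ℝ)^2*Q^2) := by
            apply mul_le_mul_of_nonneg_right h2; positivity
        _ = P^2 * ((k:ℝ)^2 * φr) * φr^2 := by rw [← hPQ]; ring
    have hφ2 : (0:ℝ) < φr^2 := by positivity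
    exact le_of_mul_le_mul_right h3 hφ2
  calc (2:ℝ)^c * σr * (k:ℝ)^2 = (2^c * (σr * (k:ℝ)^2 * Q^2)) / Q^2 := by
        field_simp
      _ ≤ (2^c * (P^2 * ((k:ℝ)^2 * φr))) / Q^2 := by
        apply div_le_div_of_nonneg_right ?_ (by positivity)
        · exact mul_le_mul_of_nonneg_left key (by positivity)
      _ = (X * Q^2) * ((k:ℝ)^2 * φr) / Q^2 := by rw [hprod]; ring
      _ = X * ((k:ℝ)^2 * φr) := by field_simp


lemma st5_sqfree_prod {s : Finset ℕ} (hs : ∀ p ∈ s, p.Prime) : Squarefree (∏ p ∈ s, p) := by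
  classical
  induction s using Finset.induction with
  | empty => simpa using squarefree_one
  | @insert a s' hx ih =>
    rw [Finset.prod_insert hx]
    have ha : a.Prime := hs a (Finset.mem_insert_self a s')
    have hs' : ∀ p ∈ s', p.Prime := fun p hp => hs p (Finset.mem_insert_of_mem hp)
    have hcop : a.Coprime (∏ p ∈ s', p) := by
      rw [Nat.Prime.coprime_iff_not_dvd ha]
      intro hdvd
      obtain ⟨q, hq, hdq⟩ := (Nat.Prime.prime ha).exists_mem_finset_dvd hdvd
      rw [(Nat.prime_dvd_prime_iff_eq ha (hs' q hq)).mp hdq] at hx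
      exact hx hq
    exact (Nat.squarefree_mul hcop).mpr ⟨ha.squarefree, ih hs'⟩

lemma st5_expand (c : ℕ → ℝ) {k : ℕ} (hk : k ≠ 0) :
    ∏ p ∈ k.primeFactors, (1 + c p)
      = ∑ d ∈ k.divisors, (if Squarefree d then ∏ p ∈ d.primeFactors, c p else 0) := by
  classical
  rw [← Finset.sum_filter]
  rw [Nat.sum_divisors_filter_squarefree hk]
  have hnf : (UniqueFactorizationMonoid.normalizedFactors k).toFinset = k.primeFactors := by
    rw [Nat.factors_eq]; exact Nat.toFinset_factors k
  rw [hnf]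
  have : ∀ i ∈ k.primeFactors.powerset,
      (∏ p ∈ (i.val.prod : ℕ).primeFactors, c p) = ∏ p ∈ i, c p := by
    intro i hi
    rw [Finset.mem_powerset] at hi
    have hip : ∀ p ∈ i, p.Prime := fun p hp => Nat.prime_of_mem_primeFactors (hi hp)
    have : (i.val.prod : ℕ) = ∏ p ∈ i, p := by
      rw [Finset.prod_val]; rfl
    rw [this, Nat.primeFactors_prod hip]
  rw [Finset.sum_congr rfl this]
  have := Finset.prod_add c (fun _ => (1:ℝ)) k.primeFactors
  simp only [Finset.prod_const_one, mul_one] at this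
  rw [← this]
  exact Finset.prod_congr rfl fun p _ => add_comm 1 (c p)


lemma st5_swap (F : ℕ → ℕ → ℝ≥0∞) (h0m : ∀ m, F 0 m = 0) (hd0 : ∀ d, F d 0 = 0) :
    ∑' k : ℕ, ∑ p ∈ k.divisorsAntidiagonal, F p.1 p.2 = ∑' p : ℕ × ℕ, F p.1 p.2 := by
  classical
  set e : ℕ → ℕ × ℕ → ℝ≥0∞ :=
    fun k p => if p ∈ k.divisorsAntidiagonal then F p.1 p.2 else 0 with he
  have h1 : ∀ k : ℕ, ∑ p ∈ k.divisorsAntidiagonal, F p.1 p.2 = ∑' p : ℕ × ℕ, e k p := by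
    intro k
    rw [tsum_eq_sum (s := k.divisorsAntidiagonal) (fun p hp => if_neg hp)]
    exact Finset.sum_congr rfl fun p hp => (if_pos hp).symm
  calc ∑' k : ℕ, ∑ p ∈ k.divisorsAntidiagonal, F p.1 p.2
      = ∑' (k : ℕ) (p : ℕ × ℕ), e k p := by rw [tsum_congr h1]
    _ = ∑' (p : ℕ × ℕ) (k : ℕ), e k p := ENNReal.tsum_comm
    _ = ∑' p : ℕ × ℕ, F p.1 p.2 := by
        refine tsum_congr fun p => ?_
        by_cases hp : p.1 * p.2 = 0
        · have hF : F p.1 p.2 = 0 := by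
            rcases Nat.mul_eq_zero.mp hp with h | h
            · rw [h] at *; exact h0m p.2
            · rw [h] at *; exact hd0 p.1
          rw [hF]
          refine ENNReal.tsum_eq_zero.mpr fun k => ?_
          refine if_neg fun hmem => ?_
          have := (Nat.mem_divisorsAntidiagonal.mp hmem)
          omega
        · rw [tsum_eq_single (p.1 * p.2) ?_]
          · exact if_pos (Nat.mem_divisorsAntidiagonal.mpr ⟨rfl, hp⟩)
          · intro k hk
            refine if_neg fun hmem => ?_
            exact hk ((Nat.mem_divisorsAntidiagonal.mp hmem).1.symm ▸ rfl)


lemma st5_tsum_ofReal_le {g : ℕ → ℝ} {c : ℝ} (hg : ∀ n, 0 ≤ g n)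
    (h : ∀ s : Finset ℕ, ∑ n ∈ s, g n ≤ c) :
    ∑' n, ENNReal.ofReal (g n) ≤ ENNReal.ofReal c := by
  rw [ENNReal.tsum_eq_iSup_sum]
  refine iSup_le fun s => ?_
  rw [← ENNReal.ofReal_sum_of_nonneg (fun n _ => hg n)]
  exact ENNReal.ofReal_le_ofReal (h s)

/-- finite telescoping bound -/
lemma st5_finsum_sq {n₀ : ℕ} (h2 : 2 ≤ n₀) (s : Finset ℕ) :
    ∑ m ∈ s, (if n₀ ≤ m then 1/(m:ℝ)^2 else 0) ≤ 1/((n₀:ℝ)-1) := by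
  classical
  set g : ℕ → ℝ := fun m => if n₀ ≤ m then 1/(m:ℝ)^2 else 0 with hg
  have hgnn : ∀ m, 0 ≤ g m := by
    intro m; rw [hg]; dsimp only; split <;> positivity
  obtain ⟨N, hN⟩ : ∃ N, s ⊆ Finset.range N := ⟨(s.sup id) + 1, fun x hx =>
    Finset.mem_range.mpr (Nat.lt_succ_of_le (Finset.le_sup (f := id) hx))⟩
  have key : ∀ N : ℕ, ∑ m ∈ Finset.range N, g m ≤ 1/((n₀:ℝ)-1) - 1/(((max N n₀ : ℕ) : ℝ) - 1) := by
    intro N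
    induction N with
    | zero => simp [Nat.max_comm]
    | succ N ih =>
      rw [Finset.sum_range_succ]
      by_cases hNn : n₀ ≤ N
      · have hmax : max N n₀ = N := Nat.max_eq_left hNn
        have hmax' : max (N+1) n₀ = N + 1 := Nat.max_eq_left (by omega)
        rw [hmax] at ih
        rw [hmax']
        have hgN : g N = 1/(N:ℝ)^2 := if_pos hNn
        have hN2 : (2:ℝ) ≤ (N:ℝ) := by exact_mod_cast h2.trans hNn
        have h3 : (0:ℝ) < (N:ℝ)-1 := by linarith
        have e1 : 1/(((N:ℝ)-1)*N) = 1/((N:ℝ)-1) - 1/(N:ℝ) := by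
          field_simp
          ring
        have e2 : 1/(N:ℝ)^2 ≤ 1/(((N:ℝ)-1)*N) := by
          apply one_div_le_one_div_of_le (mul_pos h3 (by linarith))
          nlinarith
        have htel : 1/(N:ℝ)^2 ≤ 1/((N:ℝ)-1) - 1/(N:ℝ) := by rw [← e1]; exact e2
        push_cast
        have hsimp : ((N:ℝ)+1-1) = (N:ℝ) := by ring
        rw [hgN, hsimp]
        push_cast at ih
        linarith
      · have hgN : g N = 0 := if_neg hNn
        have hmax : max N n₀ = n₀ := Nat.max_eq_right (by omega)
        have hmax' : max (N+1) n₀ = n₀ := Nat.max_eq_right (by omega)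
        rw [hmax] at ih; rw [hmax', hgN]
        linarith
  calc ∑ m ∈ s, g m ≤ ∑ m ∈ Finset.range N, g m :=
        Finset.sum_le_sum_of_subset_of_nonneg hN (fun m _ _ => hgnn m)
    _ ≤ 1/((n₀:ℝ)-1) - 1/(((max N n₀ : ℕ) : ℝ) - 1) := key N
    _ ≤ 1/((n₀:ℝ)-1) := by
        have h1 : (2:ℝ) ≤ ((max N n₀ : ℕ):ℝ) := by
          have : 2 ≤ max N n₀ := le_trans h2 (le_max_right N n₀)
          exact_mod_cast this
        have : 0 ≤ 1/(((max N n₀ : ℕ) : ℝ) - 1) := le_of_lt (div_pos one_pos (by linarith))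
        linarith


lemma st5_TL1 {x : ℝ} (hx : 1 ≤ x) :
    ∑' m : ℕ, ENNReal.ofReal (if x < (m:ℝ) then 1/(m:ℝ)^2 else 0)
      ≤ ENNReal.ofReal (2/x) := by
  have hx0 : 0 ≤ x := by linarith
  set n₀ : ℕ := Nat.floor x + 1 with hn₀
  have hfl1 : 1 ≤ Nat.floor x := Nat.one_le_floor_iff x |>.mpr hx
  have h2 : 2 ≤ n₀ := by omega
  refine st5_tsum_ofReal_le (fun m => by split <;> positivity) (fun s => ?_)
  have hiff : ∀ m : ℕ, (x < (m:ℝ)) ↔ (n₀ ≤ m) := by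
    intro m
    rw [hn₀, Nat.add_one_le_iff, ← Nat.floor_lt hx0]
  calc ∑ m ∈ s, (if x < (m:ℝ) then 1/(m:ℝ)^2 else 0)
      = ∑ m ∈ s, (if n₀ ≤ m then 1/(m:ℝ)^2 else 0) := by
        refine Finset.sum_congr rfl fun m _ => ?_
        rw [if_congr (hiff m) rfl rfl]
    _ ≤ 1/((n₀:ℝ)-1) := st5_finsum_sq h2 s
    _ ≤ 2/x := by
        have hfl : ((n₀:ℝ) - 1) = (Nat.floor x : ℝ) := by push_cast [hn₀]; ring
        rw [hfl]
        have h1 : (1:ℝ) ≤ (Nat.floor x : ℝ) := by exact_mod_cast hfl1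
        have hx2 : x ≤ 2 * (Nat.floor x : ℝ) := by
          have := Nat.lt_floor_add_one x
          linarith
        rw [div_le_div_iff₀ (by linarith) (by linarith)]
        linarith

lemma st5_TL2 {x : ℝ} (hx : 0 ≤ x) :
    ∑' m : ℕ, ENNReal.ofReal (if x < (m:ℝ) then 1/(m:ℝ)^2 else 0)
      ≤ ENNReal.ofReal 2 := by
  refine st5_tsum_ofReal_le (fun m => by split <;> positivity) (fun s => ?_)
  have hterm : ∀ m : ℕ, (if x < (m:ℝ) then 1/(m:ℝ)^2 else 0)
      ≤ (if m = 1 then (1:ℝ) else 0) + (if 2 ≤ m then 1/(m:ℝ)^2 else 0) := by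
    intro m
    by_cases h : x < (m:ℝ)
    · rw [if_pos h]
      have hm1 : 1 ≤ m := by
        by_contra hm; push_neg at hm
        interval_cases m
        · simp at h; linarith
      rcases Nat.lt_or_ge m 2 with hm2 | hm2
      · have : m = 1 := by omega
        subst this
        simp
      · rw [if_neg (by omega), if_pos hm2]
        simp
    · rw [if_neg h]
      positivity
  calc ∑ m ∈ s, (if x < (m:ℝ) then 1/(m:ℝ)^2 else 0)
      ≤ ∑ m ∈ s, ((if m = 1 then (1:ℝ) else 0) + (if 2 ≤ m then 1/(m:ℝ)^2 else 0)) :=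
        Finset.sum_le_sum fun m _ => hterm m
    _ = (∑ m ∈ s, if m = 1 then (1:ℝ) else 0) + ∑ m ∈ s, (if 2 ≤ m then 1/(m:ℝ)^2 else 0) :=
        Finset.sum_add_distrib
    _ ≤ 1 + 1/((2:ℝ)-1) := by
        gcongr
        · rw [Finset.sum_ite_eq' s 1 (fun _ => (1:ℝ))]
          split <;> norm_num
        · exact_mod_cast st5_finsum_sq le_rfl s
    _ = 2 := by norm_num

lemma st5_HL {y : ℝ} (hy : 1 ≤ y) :
    ∑' u : ℕ, ENNReal.ofReal (if 1 ≤ u ∧ (u:ℝ) ≤ y then 1/(u:ℝ) else 0)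
      ≤ ENNReal.ofReal (1 + Real.log y) := by
  classical
  refine st5_tsum_ofReal_le (fun u => by split <;> positivity) (fun s => ?_)
  set n : ℕ := Nat.floor y with hn
  have hn1 : 1 ≤ n := Nat.one_le_floor_iff y |>.mpr hy
  calc ∑ u ∈ s, (if 1 ≤ u ∧ (u:ℝ) ≤ y then 1/(u:ℝ) else 0)
      = ∑ u ∈ s.filter (fun u : ℕ => 1 ≤ u ∧ (u:ℝ) ≤ y), 1/(u:ℝ) := (Finset.sum_filter _ _).symm
    _ ≤ ∑ u ∈ Finset.Icc 1 n, 1/(u:ℝ) := by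
        refine Finset.sum_le_sum_of_subset_of_nonneg ?_ (fun u _ _ => by positivity)
        intro u hu
        rw [Finset.mem_filter] at hu
        rw [Finset.mem_Icc]
        exact ⟨hu.2.1, Nat.le_floor hu.2.2⟩
    _ = (harmonic n : ℝ) := by
        rw [harmonic_eq_sum_Icc]
        push_cast
        exact Finset.sum_congr rfl fun u _ => one_div _
    _ ≤ 1 + Real.log n := harmonic_le_one_add_log n
    _ ≤ 1 + Real.log y := by
        have h0 : (0:ℝ) < (n:ℝ) := by exact_mod_cast hn1
        have : (n:ℝ) ≤ y := Nat.floor_le (by linarith)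
        have := Real.log_le_log h0 this
        linarith


lemma st5_sqrt_prod {S : Finset ℕ} {f : ℕ → ℝ} (hf : ∀ p ∈ S, 0 ≤ f p) :
    Real.sqrt (∏ p ∈ S, f p) = ∏ p ∈ S, Real.sqrt (f p) := by
  classical
  induction S using Finset.induction with
  | empty => simp
  | @insert a S' ha ih =>
    rw [Finset.prod_insert ha, Finset.prod_insert ha,
      Real.sqrt_mul (hf a (Finset.mem_insert_self a S')),
      ih (fun p hp => hf p (Finset.mem_insert_of_mem hp))]

lemma st5_prodK {t : ℕ} (ht : t ≠ 0) :
    ∏ p ∈ t.primeFactors, (16/Real.sqrt p) ≤ 16^257 := by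
  classical
  set S := t.primeFactors with hS
  have hprime : ∀ p ∈ S, p.Prime := fun p hp => Nat.prime_of_mem_primeFactors hp
  have hfac_nonneg : ∀ p ∈ S, (0:ℝ) ≤ 16/Real.sqrt p := fun p _ => by positivity
  rw [← Finset.prod_filter_mul_prod_filter_not S (fun p => p ≤ 256) (fun p => 16/Real.sqrt (p:ℝ))]
  have h1 : ∏ p ∈ S.filter (fun p => p ≤ 256), (16/Real.sqrt p) ≤ 16^257 := by
    have hcard : (S.filter (fun p => p ≤ 256)).card ≤ 257 := by
      have hsub : S.filter (fun p => p ≤ 256) ⊆ Finset.range 257 := by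
        intro p hp
        rw [Finset.mem_range]
        have := (Finset.mem_filter.mp hp).2
        omega
      simpa using Finset.card_le_card hsub
    calc ∏ p ∈ S.filter (fun p => p ≤ 256), (16/Real.sqrt p)
        ≤ 16 ^ (S.filter (fun p => p ≤ 256)).card := by
          rw [← Finset.prod_const (16:ℝ)]
          apply Finset.prod_le_prod (fun p _ => by positivity)
          intro p hp
          have hp2 : 2 ≤ p := (hprime p (Finset.mem_filter.mp hp).1).two_le
          have h1p : (1:ℝ) ≤ Real.sqrt p := by
            rw [show (1:ℝ) = Real.sqrt 1 by simp]
            apply Real.sqrt_le_sqrt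
            exact_mod_cast Nat.one_le_of_lt hp2
          rw [div_le_iff₀ (by linarith)]
          nlinarith
      _ ≤ 16 ^ 257 := pow_le_pow_right₀ (by norm_num) hcard
  have h2 : ∏ p ∈ S.filter (fun p => ¬ p ≤ 256), (16/Real.sqrt p) ≤ 1 := by
    apply Finset.prod_le_one
    · intro p hp; positivity
    · intro p hp
      have hp256 : 257 ≤ p := by have := (Finset.mem_filter.mp hp).2; omega
      have : (16:ℝ) ≤ Real.sqrt p := by
        rw [show (16:ℝ) = Real.sqrt 256 by
          rw [show (256:ℝ) = 16^2 by norm_num, Real.sqrt_sq (by norm_num)]]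
        apply Real.sqrt_le_sqrt
        exact_mod_cast hp256.trans' (by norm_num)
      rw [div_le_one (by positivity)]
      exact this
  have hnn1 : (0:ℝ) ≤ ∏ p ∈ S.filter (fun p => p ≤ 256), (16/Real.sqrt p) :=
    Finset.prod_nonneg fun p _ => by positivity
  calc (∏ p ∈ S.filter (fun p => p ≤ 256), (16/Real.sqrt p))
        * ∏ p ∈ S.filter (fun p => ¬ p ≤ 256), (16/Real.sqrt p)
      ≤ 16^257 * 1 := by
        apply mul_le_mul h1 h2 (Finset.prod_nonneg fun p _ => by positivity) (by norm_num)
    _ = 16^257 := mul_one _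

lemma st5_w_le {t : ℕ} (ht : Squarefree t) :
    (∏ p ∈ t.primeFactors, (16/(p:ℝ))) / t ≤ 16^257 * (1/(t:ℝ) ^ ((3:ℝ)/2)) := by
  have ht0 : t ≠ 0 := ht.ne_zero
  have ht0' : (0:ℝ) < t := by exact_mod_cast Nat.pos_of_ne_zero ht0
  have hT : ((t:ℝ)) = ∏ p ∈ t.primeFactors, (p:ℝ) := by
    rw [← Nat.cast_prod]
    exact_mod_cast (Nat.prod_primeFactors_of_squarefree ht).symm
  have hsqrtT : Real.sqrt t = ∏ p ∈ t.primeFactors, Real.sqrt p := by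
    rw [hT, st5_sqrt_prod (fun p _ => by positivity)]
  have hprod_eq : (∏ p ∈ t.primeFactors, (16/(p:ℝ))) * Real.sqrt t
      = ∏ p ∈ t.primeFactors, (16/Real.sqrt p) := by
    rw [hsqrtT, ← Finset.prod_mul_distrib]
    refine Finset.prod_congr rfl fun p hp => ?_
    have hp2 : 2 ≤ p := (Nat.prime_of_mem_primeFactors hp).two_le
    have hp0 : (0:ℝ) < p := by exact_mod_cast Nat.lt_of_lt_of_le two_pos hp2
    have hsq : Real.sqrt p * Real.sqrt p = (p:ℝ) := Real.mul_self_sqrt hp0.le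
    field_simp
    nlinarith [Real.sqrt_pos.mpr hp0]
  have hKey : (∏ p ∈ t.primeFactors, (16/(p:ℝ))) * Real.sqrt t ≤ 16^257 :=
    hprod_eq ▸ st5_prodK ht0
  have hpow : (t:ℝ) ^ ((3:ℝ)/2) = (t:ℝ) * Real.sqrt t := by
    rw [show ((3:ℝ)/2) = 1 + 1/2 by norm_num, Real.rpow_add ht0', Real.rpow_one,
      ← Real.sqrt_eq_rpow]
  rw [hpow]
  have hsqrt_pos : 0 < Real.sqrt t := Real.sqrt_pos.mpr ht0'
  have h5 : (∏ p ∈ t.primeFactors, (16/(p:ℝ))) ≤ 16^257 / Real.sqrt t :=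
    (le_div_iff₀ hsqrt_pos).mpr hKey
  calc (∏ p ∈ t.primeFactors, (16/(p:ℝ))) / t
      ≤ (16^257 / Real.sqrt t) / t := by
        gcongr
    _ = 16^257 * (1/((t:ℝ) * Real.sqrt t)) := by
        field_simp


noncomputable def st5v (d : ℕ) : ℝ :=
  if Squarefree d then ∏ p ∈ d.primeFactors, (1 + 16/(p:ℝ)) else 0

noncomputable def st5w (t : ℕ) : ℝ :=
  if Squarefree t then ∏ p ∈ t.primeFactors, (16/(p:ℝ)) else 0

lemma st5v_nonneg (d : ℕ) : 0 ≤ st5v d := by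
  unfold st5v; split
  · exact Finset.prod_nonneg fun p _ => by positivity
  · exact le_refl 0

lemma st5w_nonneg (t : ℕ) : 0 ≤ st5w t := by
  unfold st5w; split
  · exact Finset.prod_nonneg fun p _ => by positivity
  · exact le_refl 0

lemma st5v_zero : st5v 0 = 0 := by
  unfold st5v
  rw [if_neg not_squarefree_zero]

lemma st5w_zero : st5w 0 = 0 := by
  unfold st5w
  rw [if_neg not_squarefree_zero]

lemma st5_sumw (d : ℕ) (hd : d ≠ 0) :
    ∑ t ∈ d.divisors, st5w t = ∏ p ∈ d.primeFactors, (1 + 16/(p:ℝ)) := by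
  rw [st5_expand (fun p => 16/(p:ℝ)) hd]
  rfl

lemma st5_v_le_sumw (d : ℕ) (hd : d ≠ 0) : st5v d ≤ ∑ t ∈ d.divisors, st5w t := by
  rw [st5_sumw d hd]
  unfold st5v
  split
  · exact le_refl _
  · refine Finset.prod_nonneg fun p _ => by positivity

lemma st5_sumv (k : ℕ) (hk : k ≠ 0) :
    ∑ d ∈ k.divisors, st5v d = ∏ p ∈ k.primeFactors, (2 + 16/(p:ℝ)) := by
  have h1 : ∑ d ∈ k.divisors, st5v d
      = ∑ d ∈ k.divisors, (if Squarefree d then ∏ p ∈ d.primeFactors, (1 + 16/(p:ℝ)) else 0) :=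
    rfl
  rw [h1, ← st5_expand (fun p => 1 + 16/(p:ℝ)) hk]
  exact Finset.prod_congr rfl fun p _ => by ring


lemma st5_conv (g : ℕ → ℝ) (hgnn : ∀ d, 0 ≤ g d)
    {x : ℝ} (hx : 0 < x) {a : ℝ} (ha : 0 < a) :
    ∑' k : ℕ, ENNReal.ofReal (if x < (k:ℝ) then (∑ d ∈ k.divisors, g d)/((k:ℝ)^2 * a) else 0)
      = ∑' q : ℕ × ℕ, ENNReal.ofReal
          (if x < (q.1:ℝ)*(q.2:ℝ) then g q.1/((q.1:ℝ)^2*(q.2:ℝ)^2*a) else 0) := by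
  classical
  set F : ℕ → ℕ → ℝ≥0∞ := fun d m => ENNReal.ofReal
    (if x < (d:ℝ)*(m:ℝ) then g d/((d:ℝ)^2*(m:ℝ)^2*a) else 0) with hF
  have h0m : ∀ m, F 0 m = 0 := by
    intro m
    rw [hF]
    simp only [Nat.cast_zero, zero_mul]
    rw [if_neg (by linarith), ENNReal.ofReal_zero]
  have hd0 : ∀ d, F d 0 = 0 := by
    intro d
    rw [hF]
    simp only [Nat.cast_zero, mul_zero]
    rw [if_neg (by linarith), ENNReal.ofReal_zero]
  rw [← st5_swap F h0m hd0]
  refine tsum_congr fun k => ?_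
  have hFnn : ∀ q : ℕ × ℕ, (0:ℝ) ≤ (if x < (q.1:ℝ)*(q.2:ℝ) then g q.1/((q.1:ℝ)^2*(q.2:ℝ)^2*a) else 0) := by
    intro q
    split
    · have := hgnn q.1; positivity
    · exact le_refl 0
  rw [hF]
  simp only
  rw [← ENNReal.ofReal_sum_of_nonneg (fun q _ => hFnn q)]
  congr 1
  by_cases hk : k = 0
  · subst hk
    rw [Nat.divisorsAntidiagonal_zero, Finset.sum_empty, Nat.cast_zero, if_neg (by linarith)]
  · by_cases hgt : x < (k:ℝ)
    · rw [if_pos hgt]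
      have hstep : ∀ q ∈ k.divisorsAntidiagonal,
          (if x < (q.1:ℝ)*(q.2:ℝ) then g q.1/((q.1:ℝ)^2*(q.2:ℝ)^2*a) else 0)
            = g q.1/((k:ℝ)^2 * a) := by
        intro q hq
        have hqk : q.1 * q.2 = k := (Nat.mem_divisorsAntidiagonal.mp hq).1
        have hcast : (q.1:ℝ)*(q.2:ℝ) = (k:ℝ) := by exact_mod_cast congrArg (Nat.cast (R := ℝ)) hqk
        rw [if_pos (hcast ▸ hgt)]
        rw [show (q.1:ℝ)^2*(q.2:ℝ)^2 = ((q.1:ℝ)*(q.2:ℝ))^2 by ring, hcast]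
      rw [Finset.sum_congr rfl hstep]
      rw [Nat.sum_divisorsAntidiagonal (fun d m => g d/((k:ℝ)^2*a))]
      rw [← Finset.sum_div]
    · rw [if_neg hgt]
      symm
      apply Finset.sum_eq_zero
      intro q hq
      have hqk : q.1 * q.2 = k := (Nat.mem_divisorsAntidiagonal.mp hq).1
      have hcast : (q.1:ℝ)*(q.2:ℝ) = (k:ℝ) := by exact_mod_cast congrArg (Nat.cast (R := ℝ)) hqk
      rw [hcast, if_neg hgt]


lemma st5_WB :
    ∑' t : ℕ, ENNReal.ofReal (st5w t/(t:ℝ))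
      ≤ ENNReal.ofReal (16^257 * ∑' t : ℕ, 1/(t:ℝ) ^ ((3:ℝ)/2)) := by
  have hsumm : Summable (fun t : ℕ => 16^257 * (1/(t:ℝ) ^ ((3:ℝ)/2))) :=
    (Real.summable_one_div_nat_rpow.mpr (by norm_num)).mul_left _
  calc ∑' t : ℕ, ENNReal.ofReal (st5w t/(t:ℝ))
      ≤ ∑' t : ℕ, ENNReal.ofReal (16^257 * (1/(t:ℝ) ^ ((3:ℝ)/2))) := by
        refine ENNReal.tsum_le_tsum fun t => ENNReal.ofReal_le_ofReal ?_
        unfold st5w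
        split
        · exact st5_w_le (by assumption)
        · rw [zero_div]
          positivity
    _ = ENNReal.ofReal (∑' t : ℕ, 16^257 * (1/(t:ℝ) ^ ((3:ℝ)/2))) :=
        (ENNReal.ofReal_tsum_of_nonneg (fun t => by positivity) hsumm).symm
    _ = ENNReal.ofReal (16^257 * ∑' t : ℕ, 1/(t:ℝ) ^ ((3:ℝ)/2)) := by
        rw [tsum_mul_left]

lemma st5_Mt {ξ : ℝ} (hξ : 2 ≤ ξ) (t : ℕ) :
    ∑' (u : ℕ) (m : ℕ), ENNReal.ofReal
        (if ξ < (t:ℝ)*(u:ℝ)*(m:ℝ) then st5w t/((t:ℝ)^2*(u:ℝ)^2*(m:ℝ)^2) else 0)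
      ≤ ENNReal.ofReal (((6 + 2*Real.log ξ)/ξ) * (st5w t/(t:ℝ))) := by
  have hξ0 : (0:ℝ) < ξ := by linarith
  by_cases ht0 : t = 0
  · subst ht0
    have hz : ∀ u m : ℕ, (if ξ < ((0:ℕ):ℝ)*(u:ℝ)*(m:ℝ) then
        st5w 0/(((0:ℕ):ℝ)^2*(u:ℝ)^2*(m:ℝ)^2) else 0) = 0 := by
      intro u m
      rw [if_neg (by push_cast; simp; linarith)]
    simp only [hz, ENNReal.ofReal_zero, tsum_zero]
    exact bot_le
  have ht1 : 1 ≤ t := Nat.one_le_iff_ne_zero.mpr ht0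
  have htR : (1:ℝ) ≤ (t:ℝ) := by exact_mod_cast ht1
  have htR0 : (0:ℝ) < (t:ℝ) := by linarith
  have hwnn := st5w_nonneg t
  -- inner factorization
  have hfact : ∀ u : ℕ, ∑' m : ℕ, ENNReal.ofReal
      (if ξ < (t:ℝ)*(u:ℝ)*(m:ℝ) then st5w t/((t:ℝ)^2*(u:ℝ)^2*(m:ℝ)^2) else 0)
      = ENNReal.ofReal (st5w t/((t:ℝ)^2*(u:ℝ)^2)) *
        ∑' m : ℕ, ENNReal.ofReal (if ξ < (t:ℝ)*(u:ℝ)*(m:ℝ) then 1/(m:ℝ)^2 else 0) := by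
    intro u
    rw [← ENNReal.tsum_mul_left]
    refine tsum_congr fun m => ?_
    rw [← ENNReal.ofReal_mul (by positivity)]
    congr 1
    by_cases hg : ξ < (t:ℝ)*(u:ℝ)*(m:ℝ)
    · rw [if_pos hg, if_pos hg]
      have hm0 : (0:ℝ) < (m:ℝ) := by
        rcases Nat.eq_zero_or_pos m with h | h
        · subst h; simp at hg; linarith
        · exact_mod_cast h
      have hu0 : (0:ℝ) < (u:ℝ) := by
        rcases Nat.eq_zero_or_pos u with h | h
        · subst h; simp at hg; linarith
        · exact_mod_cast h
      field_simp
      try ring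
    · simp [if_neg hg]
  -- per-u bound
  set B1 : ℕ → ℝ≥0∞ := fun u => ENNReal.ofReal (2*st5w t/((t:ℝ)*ξ)) *
    ENNReal.ofReal (if 1 ≤ u ∧ (u:ℝ) ≤ ξ then 1/(u:ℝ) else 0) with hB1
  set B2 : ℕ → ℝ≥0∞ := fun u => ENNReal.ofReal (2*st5w t/(t:ℝ)^2) *
    ENNReal.ofReal (if ξ/(t:ℝ) < (u:ℝ) then 1/(u:ℝ)^2 else 0) with hB2
  have hUB : ∀ u : ℕ, ENNReal.ofReal (st5w t/((t:ℝ)^2*(u:ℝ)^2)) *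
      (∑' m : ℕ, ENNReal.ofReal (if ξ < (t:ℝ)*(u:ℝ)*(m:ℝ) then 1/(m:ℝ)^2 else 0))
      ≤ B1 u + B2 u := by
    intro u
    rcases Nat.eq_zero_or_pos u with hu0 | hu1
    · subst hu0
      have : ∀ m:ℕ, (if ξ < (t:ℝ)*((0:ℕ):ℝ)*(m:ℝ) then 1/(m:ℝ)^2 else 0) = 0 := by
        intro m
        rw [if_neg (by push_cast; simp; linarith)]
      simp only [this, ENNReal.ofReal_zero, tsum_zero, mul_zero]
      exact bot_le
    have huR : (1:ℝ) ≤ (u:ℝ) := by exact_mod_cast hu1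
    have huR0 : (0:ℝ) < (u:ℝ) := by linarith
    have hguard : ∀ m : ℕ, (ξ < (t:ℝ)*(u:ℝ)*(m:ℝ)) ↔ (ξ/((t:ℝ)*(u:ℝ)) < (m:ℝ)) := by
      intro m
      rw [div_lt_iff₀ (by positivity)]
      constructor <;> intro h <;> nlinarith
    have hTeq : (∑' m : ℕ, ENNReal.ofReal (if ξ < (t:ℝ)*(u:ℝ)*(m:ℝ) then 1/(m:ℝ)^2 else 0))
        = ∑' m : ℕ, ENNReal.ofReal (if ξ/((t:ℝ)*(u:ℝ)) < (m:ℝ) then 1/(m:ℝ)^2 else 0) := by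
      refine tsum_congr fun m => ?_
      rw [if_congr (hguard m) rfl rfl]
    rw [hTeq]
    by_cases hcase : (t:ℝ)*(u:ℝ) ≤ ξ
    · -- Tail ≤ 2tu/ξ ; bound by B1
      have hx1 : 1 ≤ ξ/((t:ℝ)*(u:ℝ)) := by
        rw [le_div_iff₀ (by positivity)]
        linarith
      have htail := st5_TL1 hx1
      have h2 : ENNReal.ofReal (2/(ξ/((t:ℝ)*(u:ℝ)))) = ENNReal.ofReal (2*(t:ℝ)*(u:ℝ)/ξ) := by
        congr 1
        field_simp
      calc ENNReal.ofReal (st5w t/((t:ℝ)^2*(u:ℝ)^2)) * _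
          ≤ ENNReal.ofReal (st5w t/((t:ℝ)^2*(u:ℝ)^2)) * ENNReal.ofReal (2*(t:ℝ)*(u:ℝ)/ξ) := by
            rw [← h2]
            exact mul_le_mul_right htail _
        _ = B1 u := by
            rw [hB1]
            simp only
            rw [if_pos ⟨hu1, by nlinarith⟩]
            rw [← ENNReal.ofReal_mul (by positivity), ← ENNReal.ofReal_mul (by positivity)]
            congr 1
            field_simp
        _ ≤ B1 u + B2 u := le_self_add
    · -- ξ < tu : Tail ≤ 2 ; bound by B2
      push_neg at hcase
      have hx0 : 0 ≤ ξ/((t:ℝ)*(u:ℝ)) := by positivity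
      have htail := st5_TL2 hx0
      calc ENNReal.ofReal (st5w t/((t:ℝ)^2*(u:ℝ)^2)) * _
          ≤ ENNReal.ofReal (st5w t/((t:ℝ)^2*(u:ℝ)^2)) * ENNReal.ofReal 2 :=
            mul_le_mul_right htail _
        _ = B2 u := by
            rw [hB2]
            simp only
            rw [if_pos (by rw [div_lt_iff₀ htR0]; nlinarith)]
            rw [← ENNReal.ofReal_mul (by positivity), ← ENNReal.ofReal_mul (by positivity)]
            congr 1
            field_simp
        _ ≤ B1 u + B2 u := le_add_self
  -- sum the bounds
  have hsum1 : ∑' u : ℕ, B1 u ≤ ENNReal.ofReal (2*st5w t*(1 + Real.log ξ)/((t:ℝ)*ξ)) := by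
    rw [hB1, ENNReal.tsum_mul_left]
    calc ENNReal.ofReal (2*st5w t/((t:ℝ)*ξ)) *
        ∑' u : ℕ, ENNReal.ofReal (if 1 ≤ u ∧ (u:ℝ) ≤ ξ then 1/(u:ℝ) else 0)
        ≤ ENNReal.ofReal (2*st5w t/((t:ℝ)*ξ)) * ENNReal.ofReal (1 + Real.log ξ) :=
          mul_le_mul_right (st5_HL (by linarith)) _
      _ = ENNReal.ofReal (2*st5w t*(1 + Real.log ξ)/((t:ℝ)*ξ)) := by
          rw [← ENNReal.ofReal_mul (by positivity)]
          congr 1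
          ring
  have hsum2 : ∑' u : ℕ, B2 u ≤ ENNReal.ofReal (4*st5w t/((t:ℝ)*ξ)) := by
    rw [hB2, ENNReal.tsum_mul_left]
    by_cases hcase : (t:ℝ) ≤ ξ
    · have hx1 : 1 ≤ ξ/(t:ℝ) := by rw [le_div_iff₀ htR0]; linarith
      calc ENNReal.ofReal (2*st5w t/(t:ℝ)^2) *
          ∑' u : ℕ, ENNReal.ofReal (if ξ/(t:ℝ) < (u:ℝ) then 1/(u:ℝ)^2 else 0)
          ≤ ENNReal.ofReal (2*st5w t/(t:ℝ)^2) * ENNReal.ofReal (2/(ξ/(t:ℝ))) :=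
            mul_le_mul_right (st5_TL1 hx1) _
        _ ≤ ENNReal.ofReal (4*st5w t/((t:ℝ)*ξ)) := by
            rw [← ENNReal.ofReal_mul (by positivity)]
            apply ENNReal.ofReal_le_ofReal
            have heq : 2*st5w t/(t:ℝ)^2 * (2/(ξ/(t:ℝ))) = 4*st5w t/((t:ℝ)*ξ) := by
              field_simp
              ring
            exact le_of_eq heq
    · push_neg at hcase
      have hx0 : 0 ≤ ξ/(t:ℝ) := by positivity
      calc ENNReal.ofReal (2*st5w t/(t:ℝ)^2) *
          ∑' u : ℕ, ENNReal.ofReal (if ξ/(t:ℝ) < (u:ℝ) then 1/(u:ℝ)^2 else 0)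
          ≤ ENNReal.ofReal (2*st5w t/(t:ℝ)^2) * ENNReal.ofReal 2 :=
            mul_le_mul_right (st5_TL2 hx0) _
        _ ≤ ENNReal.ofReal (4*st5w t/((t:ℝ)*ξ)) := by
            rw [← ENNReal.ofReal_mul (by positivity)]
            apply ENNReal.ofReal_le_ofReal
            have heq : 2*st5w t/(t:ℝ)^2*2 = 4*st5w t/((t:ℝ)^2) := by ring
            rw [heq]
            gcongr
            nlinarith
  calc ∑' (u : ℕ) (m : ℕ), ENNReal.ofReal
        (if ξ < (t:ℝ)*(u:ℝ)*(m:ℝ) then st5w t/((t:ℝ)^2*(u:ℝ)^2*(m:ℝ)^2) else 0)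
      = ∑' u : ℕ, ENNReal.ofReal (st5w t/((t:ℝ)^2*(u:ℝ)^2)) *
        ∑' m : ℕ, ENNReal.ofReal (if ξ < (t:ℝ)*(u:ℝ)*(m:ℝ) then 1/(m:ℝ)^2 else 0) :=
        tsum_congr hfact
    _ ≤ ∑' u : ℕ, (B1 u + B2 u) := ENNReal.tsum_le_tsum hUB
    _ = (∑' u, B1 u) + ∑' u, B2 u := ENNReal.tsum_add
    _ ≤ ENNReal.ofReal (2*st5w t*(1 + Real.log ξ)/((t:ℝ)*ξ)) +
        ENNReal.ofReal (4*st5w t/((t:ℝ)*ξ)) := add_le_add hsum1 hsum2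
    _ = ENNReal.ofReal (2*st5w t*(1 + Real.log ξ)/((t:ℝ)*ξ) + 4*st5w t/((t:ℝ)*ξ)) := by
        have hlog : (0:ℝ) ≤ Real.log ξ := Real.log_nonneg (by linarith)
        refine (ENNReal.ofReal_add ?_ (by positivity)).symm
        apply div_nonneg ?_ (by positivity)
        nlinarith
    _ = ENNReal.ofReal (((6 + 2*Real.log ξ)/ξ) * (st5w t/(t:ℝ))) := by
        congr 1
        field_simp
        ring


lemma st5_prime_ineq {p : ℕ} (hp : 2 ≤ p) :
    2*(p:ℝ)^2/((p:ℝ)-1)^2 ≤ 2 + 16/(p:ℝ) := by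
  have hpR : (2:ℝ) ≤ (p:ℝ) := by exact_mod_cast hp
  have h1 : (0:ℝ) < (p:ℝ)-1 := by linarith
  have h0 : (0:ℝ) < (p:ℝ) := by linarith
  have e : 2 + 16/(p:ℝ) = (2*(p:ℝ)+16)/(p:ℝ) := by field_simp
  rw [e, div_le_div_iff₀ (by positivity) h0]
  nlinarith [sq_nonneg ((p:ℝ)-2)]

lemma st5_G_le (k : ℕ) (hk : k ≠ 0) :
    ∏ p ∈ k.primeFactors, (2*(p:ℝ)^2/((p:ℝ)-1)^2) ≤ ∑ d ∈ k.divisors, st5v d := by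
  rw [st5_sumv k hk]
  refine Finset.prod_le_prod (fun p _ => by positivity) (fun p hp => ?_)
  exact st5_prime_ineq (Nat.prime_of_mem_primeFactors hp).two_le

/-- For every `ξ ≥ 2`, `∑_{k > ξ} 2^{ω(k)} σ(k) / (k² φ(k)) ≪ (log ξ)/ξ`. -/
theorem stmt_5 : ∃ C : ℝ, 0 < C ∧ ∀ ξ : ℝ, 2 ≤ ξ →
    (∑' k : ℕ, if ξ < (k : ℝ) then
        (2 : ℝ) ^ k.primeFactors.card * ((ArithmeticFunction.sigma 1) k : ℝ)
          / ((k : ℝ) ^ 2 * (Nat.totient k : ℝ))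
      else 0)
      ≤ C * Real.log ξ / ξ := by
  classical
  have hlog2 : 0 < Real.log 2 := Real.log_pos (by norm_num)
  set Zr : ℝ := ∑' t : ℕ, 1/(t:ℝ) ^ ((3:ℝ)/2) with hZrdef
  have hZrnn : 0 ≤ Zr := tsum_nonneg fun t => by positivity
  have hC1 : (0:ℝ) < 2 + 6/Real.log 2 := by positivity
  have hC2 : (0:ℝ) < 16^257 * Zr + 1 :=
    add_pos_of_nonneg_of_pos (mul_nonneg (by positivity) hZrnn) one_pos
  refine ⟨(2 + 6/Real.log 2) * (16^257 * Zr + 1), mul_pos hC1 hC2, fun ξ hξ => ?_⟩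
  have hξ0 : (0:ℝ) < ξ := by linarith
  have hξ1 : (1:ℝ) < ξ := by linarith
  have hlogξ : 0 < Real.log ξ := Real.log_pos hξ1
  have hRHS : 0 ≤ (2 + 6/Real.log 2) * (16^257 * Zr + 1) * Real.log ξ / ξ :=
    div_nonneg (mul_nonneg (mul_nonneg hC1.le hC2.le) hlogξ.le) hξ0.le
  set f : ℕ → ℝ := fun k => if ξ < (k : ℝ) then
        (2 : ℝ) ^ k.primeFactors.card * ((ArithmeticFunction.sigma 1) k : ℝ)
          / ((k : ℝ) ^ 2 * (Nat.totient k : ℝ))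
      else 0 with hfdef
  by_cases hsum : Summable f
  case neg =>
    rw [tsum_eq_zero_of_not_summable hsum]
    exact hRHS
  case pos =>
  have hfnn : ∀ k, 0 ≤ f k := by
    intro k
    rw [hfdef]
    dsimp only
    split
    · positivity
    · exact le_refl 0
  suffices hmain : ∑' k, ENNReal.ofReal (f k)
      ≤ ENNReal.ofReal ((2 + 6/Real.log 2) * (16^257 * Zr + 1) * Real.log ξ / ξ) by
    have h1 := ENNReal.ofReal_tsum_of_nonneg hfnn hsum
    rw [← h1] at hmain
    exact (ENNReal.ofReal_le_ofReal_iff hRHS).mp hmain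
  -- Step 1 : pointwise bound by divisor sums of st5v
  have hstep1 : ∀ k : ℕ, f k
      ≤ (if ξ < (k:ℝ) then (∑ d ∈ k.divisors, st5v d)/((k:ℝ)^2 * 1) else 0) := by
    intro k
    rw [hfdef]
    dsimp only
    by_cases hgt : ξ < (k:ℝ)
    · rw [if_pos hgt, if_pos hgt]
      have hk0 : k ≠ 0 := by
        rintro rfl
        simp only [Nat.cast_zero] at hgt
        linarith
      have hk1 : 1 ≤ k := Nat.one_le_iff_ne_zero.mpr hk0
      have hkR : (0:ℝ) < (k:ℝ) := by
        have : 0 < k := hk1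
        exact_mod_cast this
      calc (2 : ℝ) ^ k.primeFactors.card * ((ArithmeticFunction.sigma 1) k : ℝ)
          / ((k : ℝ) ^ 2 * (Nat.totient k : ℝ))
          ≤ (∏ p ∈ k.primeFactors, (2*(p:ℝ)^2/((p:ℝ)-1)^2)) / (k:ℝ)^2 := st5_P1 k hk1
        _ ≤ (∑ d ∈ k.divisors, st5v d) / (k:ℝ)^2 := by
            gcongr
            exact st5_G_le k hk0
        _ = (∑ d ∈ k.divisors, st5v d)/((k:ℝ)^2 * 1) := by rw [mul_one]
    · rw [if_neg hgt, if_neg hgt]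
  have hc1 : ∑' k, ENNReal.ofReal (f k)
      ≤ ∑' k : ℕ, ENNReal.ofReal (if ξ < (k:ℝ) then (∑ d ∈ k.divisors, st5v d)/((k:ℝ)^2 * 1) else 0) :=
    ENNReal.tsum_le_tsum fun k => ENNReal.ofReal_le_ofReal (hstep1 k)
  have hc2 := st5_conv st5v st5v_nonneg hξ0 (one_pos (α := ℝ))
  -- Step 2 : replace st5v by divisor sums of st5w
  have hc3 : ∑' q : ℕ × ℕ, ENNReal.ofReal
        (if ξ < (q.1:ℝ)*(q.2:ℝ) then st5v q.1/((q.1:ℝ)^2*(q.2:ℝ)^2*1) else 0)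
      ≤ ∑' q : ℕ × ℕ, ENNReal.ofReal
        (if ξ < (q.1:ℝ)*(q.2:ℝ) then (∑ t ∈ q.1.divisors, st5w t)/((q.1:ℝ)^2*(q.2:ℝ)^2) else 0) := by
    refine ENNReal.tsum_le_tsum fun q => ENNReal.ofReal_le_ofReal ?_
    by_cases hgt : ξ < (q.1:ℝ)*(q.2:ℝ)
    · rw [if_pos hgt, if_pos hgt]
      have hq1 : q.1 ≠ 0 := by
        rintro h
        rw [h] at hgt
        simp only [Nat.cast_zero, zero_mul] at hgt
        linarith
      rw [mul_one]
      gcongr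
      exact st5_v_le_sumw q.1 hq1
    · rw [if_neg hgt, if_neg hgt]
  -- Step 3 : reorganize into iterated sums with m outside
  have hc4 : ∑' q : ℕ × ℕ, ENNReal.ofReal
        (if ξ < (q.1:ℝ)*(q.2:ℝ) then (∑ t ∈ q.1.divisors, st5w t)/((q.1:ℝ)^2*(q.2:ℝ)^2) else 0)
      = ∑' (m : ℕ) (d : ℕ), ENNReal.ofReal
        (if ξ < (d:ℝ)*(m:ℝ) then (∑ t ∈ d.divisors, st5w t)/((d:ℝ)^2*(m:ℝ)^2) else 0) := by
    rw [ENNReal.tsum_prod (f := fun (d m : ℕ) => ENNReal.ofReal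
      (if ξ < (d:ℝ)*(m:ℝ) then (∑ t ∈ d.divisors, st5w t)/((d:ℝ)^2*(m:ℝ)^2) else 0))]
    exact ENNReal.tsum_comm
  -- Step 4 : second convolution, for each fixed m
  have hc5 : ∀ m : ℕ, ∑' d : ℕ, ENNReal.ofReal
        (if ξ < (d:ℝ)*(m:ℝ) then (∑ t ∈ d.divisors, st5w t)/((d:ℝ)^2*(m:ℝ)^2) else 0)
      = ∑' q : ℕ × ℕ, ENNReal.ofReal
        (if ξ < (q.1:ℝ)*(q.2:ℝ)*(m:ℝ) then st5w q.1/((q.1:ℝ)^2*(q.2:ℝ)^2*(m:ℝ)^2) else 0) := by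
    intro m
    rcases Nat.eq_zero_or_pos m with hm | hm
    · subst hm
      have hL : ∀ d : ℕ, (if ξ < (d:ℝ)*((0:ℕ):ℝ) then
          (∑ t ∈ d.divisors, st5w t)/((d:ℝ)^2*((0:ℕ):ℝ)^2) else 0) = 0 := by
        intro d
        rw [if_neg (by push_cast; simp; linarith)]
      have hR : ∀ q : ℕ × ℕ, (if ξ < (q.1:ℝ)*(q.2:ℝ)*((0:ℕ):ℝ) then
          st5w q.1/((q.1:ℝ)^2*(q.2:ℝ)^2*((0:ℕ):ℝ)^2) else 0) = 0 := by
        intro q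
        rw [if_neg (by push_cast; simp; linarith)]
      simp only [hL, hR, ENNReal.ofReal_zero, tsum_zero]
    have hmR : (0:ℝ) < (m:ℝ) := by exact_mod_cast hm
    have hx : 0 < ξ/(m:ℝ) := div_pos hξ0 hmR
    have ha : (0:ℝ) < (m:ℝ)^2 := by positivity
    have hconv := st5_conv st5w st5w_nonneg hx ha
    have e1 : (∑' d : ℕ, ENNReal.ofReal
        (if ξ < (d:ℝ)*(m:ℝ) then (∑ t ∈ d.divisors, st5w t)/((d:ℝ)^2*(m:ℝ)^2) else 0))
        = ∑' d : ℕ, ENNReal.ofReal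
          (if ξ/(m:ℝ) < (d:ℝ) then (∑ t ∈ d.divisors, st5w t)/((d:ℝ)^2*(m:ℝ)^2) else 0) := by
      refine tsum_congr fun d => ?_
      rw [if_congr (div_lt_iff₀ hmR).symm rfl rfl]
    have e3 : (∑' q : ℕ × ℕ, ENNReal.ofReal
          (if ξ/(m:ℝ) < (q.1:ℝ)*(q.2:ℝ) then st5w q.1/((q.1:ℝ)^2*(q.2:ℝ)^2*(m:ℝ)^2) else 0))
        = ∑' q : ℕ × ℕ, ENNReal.ofReal
          (if ξ < (q.1:ℝ)*(q.2:ℝ)*(m:ℝ) then st5w q.1/((q.1:ℝ)^2*(q.2:ℝ)^2*(m:ℝ)^2) else 0) := by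
      refine tsum_congr fun q => ?_
      rw [if_congr (div_lt_iff₀ hmR) rfl rfl]
    exact e1.trans (hconv.trans e3)
  -- Step 5 : reorganize into t, u, m order
  have hc6 : ∑' (m : ℕ) (q : ℕ × ℕ), ENNReal.ofReal
        (if ξ < (q.1:ℝ)*(q.2:ℝ)*(m:ℝ) then st5w q.1/((q.1:ℝ)^2*(q.2:ℝ)^2*(m:ℝ)^2) else 0)
      = ∑' (t : ℕ) (u : ℕ) (m : ℕ), ENNReal.ofReal
        (if ξ < (t:ℝ)*(u:ℝ)*(m:ℝ) then st5w t/((t:ℝ)^2*(u:ℝ)^2*(m:ℝ)^2) else 0) := by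
    rw [ENNReal.tsum_comm (f := fun (m : ℕ) (q : ℕ × ℕ) => ENNReal.ofReal
        (if ξ < (q.1:ℝ)*(q.2:ℝ)*(m:ℝ) then st5w q.1/((q.1:ℝ)^2*(q.2:ℝ)^2*(m:ℝ)^2) else 0))]
    rw [ENNReal.tsum_prod (f := fun (t u : ℕ) => ∑' m : ℕ, ENNReal.ofReal
        (if ξ < (t:ℝ)*(u:ℝ)*(m:ℝ) then st5w t/((t:ℝ)^2*(u:ℝ)^2*(m:ℝ)^2) else 0))]
  -- Step 6 : apply the middle estimate and sum over t
  have hc7 : ∑' (t : ℕ) (u : ℕ) (m : ℕ), ENNReal.ofReal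
        (if ξ < (t:ℝ)*(u:ℝ)*(m:ℝ) then st5w t/((t:ℝ)^2*(u:ℝ)^2*(m:ℝ)^2) else 0)
      ≤ ∑' t : ℕ, ENNReal.ofReal (((6 + 2*Real.log ξ)/ξ) * (st5w t/(t:ℝ))) :=
    ENNReal.tsum_le_tsum fun t => st5_Mt hξ t
  have hc8 : ∑' t : ℕ, ENNReal.ofReal (((6 + 2*Real.log ξ)/ξ) * (st5w t/(t:ℝ)))
      ≤ ENNReal.ofReal ((6 + 2*Real.log ξ)/ξ) * ENNReal.ofReal (16^257 * Zr) := by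
    have hcnn : (0:ℝ) ≤ (6 + 2*Real.log ξ)/ξ := div_nonneg (by nlinarith) hξ0.le
    calc ∑' t : ℕ, ENNReal.ofReal (((6 + 2*Real.log ξ)/ξ) * (st5w t/(t:ℝ)))
        = ∑' t : ℕ, ENNReal.ofReal ((6 + 2*Real.log ξ)/ξ) * ENNReal.ofReal (st5w t/(t:ℝ)) := by
          refine tsum_congr fun t => ?_
          rw [← ENNReal.ofReal_mul hcnn]
      _ = ENNReal.ofReal ((6 + 2*Real.log ξ)/ξ) * ∑' t : ℕ, ENNReal.ofReal (st5w t/(t:ℝ)) :=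
          ENNReal.tsum_mul_left
      _ ≤ ENNReal.ofReal ((6 + 2*Real.log ξ)/ξ) * ENNReal.ofReal (16^257 * Zr) :=
          mul_le_mul_right st5_WB _
  have hc9 : ENNReal.ofReal ((6 + 2*Real.log ξ)/ξ) * ENNReal.ofReal (16^257 * Zr)
      ≤ ENNReal.ofReal ((2 + 6/Real.log 2) * (16^257 * Zr + 1) * Real.log ξ / ξ) := by
    rw [← ENNReal.ofReal_mul (div_nonneg (by nlinarith) hξ0.le)]
    apply ENNReal.ofReal_le_ofReal
    set L := Real.log ξ with hLdef
    set Z0 : ℝ := 16^257 * Zr with hZ0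
    have hZ0nn : 0 ≤ Z0 := mul_nonneg (by positivity) hZrnn
    have hL2 : Real.log 2 ≤ L := Real.log_le_log (by norm_num) hξ
    have h6 : (6:ℝ) ≤ 6/Real.log 2 * L := by
      rw [div_mul_eq_mul_div, le_div_iff₀ hlog2]
      nlinarith
    have key : (6+2*L)*Z0 ≤ (2+6/Real.log 2)*(Z0+1)*L := by
      nlinarith [mul_le_mul_of_nonneg_right h6 hZ0nn, h6, hlogξ, hZ0nn]
    calc (6 + 2*L)/ξ * Z0 = (6+2*L)*Z0/ξ := by ring
      _ ≤ (2+6/Real.log 2)*(Z0+1)*L/ξ := by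
          gcongr
      _ = (2 + 6/Real.log 2) * (Z0 + 1) * L / ξ := rfl
  -- put everything together
  calc ∑' k, ENNReal.ofReal (f k)
      ≤ ∑' k : ℕ, ENNReal.ofReal (if ξ < (k:ℝ) then (∑ d ∈ k.divisors, st5v d)/((k:ℝ)^2 * 1) else 0) := hc1
    _ = ∑' q : ℕ × ℕ, ENNReal.ofReal
        (if ξ < (q.1:ℝ)*(q.2:ℝ) then st5v q.1/((q.1:ℝ)^2*(q.2:ℝ)^2*1) else 0) := hc2
    _ ≤ ∑' q : ℕ × ℕ, ENNReal.ofReal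
        (if ξ < (q.1:ℝ)*(q.2:ℝ) then (∑ t ∈ q.1.divisors, st5w t)/((q.1:ℝ)^2*(q.2:ℝ)^2) else 0) := hc3
    _ = ∑' (m : ℕ) (d : ℕ), ENNReal.ofReal
        (if ξ < (d:ℝ)*(m:ℝ) then (∑ t ∈ d.divisors, st5w t)/((d:ℝ)^2*(m:ℝ)^2) else 0) := hc4
    _ = ∑' (m : ℕ) (q : ℕ × ℕ), ENNReal.ofReal
        (if ξ < (q.1:ℝ)*(q.2:ℝ)*(m:ℝ) then st5w q.1/((q.1:ℝ)^2*(q.2:ℝ)^2*(m:ℝ)^2) else 0) :=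
        tsum_congr hc5
    _ = ∑' (t : ℕ) (u : ℕ) (m : ℕ), ENNReal.ofReal
        (if ξ < (t:ℝ)*(u:ℝ)*(m:ℝ) then st5w t/((t:ℝ)^2*(u:ℝ)^2*(m:ℝ)^2) else 0) := hc6
    _ ≤ ∑' t : ℕ, ENNReal.ofReal (((6 + 2*Real.log ξ)/ξ) * (st5w t/(t:ℝ))) := hc7
    _ ≤ ENNReal.ofReal ((6 + 2*Real.log ξ)/ξ) * ENNReal.ofReal (16^257 * Zr) := hc8
    _ ≤ ENNReal.ofReal ((2 + 6/Real.log 2) * (16^257 * Zr + 1) * Real.log ξ / ξ) := hc9
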